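/- Power rule: for the N-step system with potential g(u_0,...,u_{N−1}) = Σ_{i<N} f(u_i) (where the strongly spanning sets for the N-step system are required to keep the state in int Q at all intermediate times), the inner invariance pressure satisfies P_int^N(g,Q) = N · P_int(f,Q). -/

import Mathlib

open Filter Topology
open scoped ENNReal

noncomputable section

/-- Solution map of the discrete-time control system `x_{k+1} = F(x_k, u_k)`. -/
def phi {X U : Type*} (F : X → U → X) : ℕ → X → (ℕ → U) → X
  | 0, x, _ => x
  | k + 1, x, ω => F (phi F k x ω) (ω k)

/-- Birkhoff-type sum of `f` along the first `n` control values. -/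
def Snf {U : Type*} (f : U → ℝ) (n : ℕ) (ω : ℕ → U) : ℝ :=
  ∑ i ∈ Finset.range n, f (ω i)

/-- `S` is a strongly `(n,Q)`-spanning set of control sequences. -/
def IsSpanningSet {X U : Type*} [TopologicalSpace X] (F : X → U → X) (Q : Set X) (n : ℕ)
    (S : Set (ℕ → U)) : Prop :=
  ∀ x ∈ Q, ∃ ω ∈ S, ∀ i, 1 ≤ i → i ≤ n → phi F i x ω ∈ interior Q

/-- `Q` is strongly invariant: every point of `Q` can be steered into the interior of `Q`. -/
def StronglyInvariant {X U : Type*} [TopologicalSpace X] (F : X → U → X) (Q : Set X) : Prop :=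
  ∀ x ∈ Q, ∃ u, F x u ∈ interior Q

/-- `a_n(f,Q)`: infimum over strongly `(n,Q)`-spanning (finite) sets `S` of
`∑_{ω ∈ S} exp ((S_n f)(ω))`. -/
def aInv {X U : Type*} [TopologicalSpace X] (F : X → U → X) (f : U → ℝ) (Q : Set X) (n : ℕ) :
    ℝ≥0∞ :=
  ⨅ (S : Finset (ℕ → U)) (_ : IsSpanningSet F Q n ↑S),
    ∑ ω ∈ S, ENNReal.ofReal (Real.exp (Snf f n ω))

/-- The inner invariance pressure `P_int(f,Q) = lim (1/n) log a_n(f,Q)` (as a limsup, with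
values in the extended reals). -/
def Pinv {X U : Type*} [TopologicalSpace X] (F : X → U → X) (f : U → ℝ) (Q : Set X) : EReal :=
  Filter.atTop.limsup fun n : ℕ => (((n : ℝ)⁻¹ : ℝ) : EReal) * ENNReal.log (aInv F f Q n)

section Aux

variable {X U : Type*} [MetricSpace X] (F : X → U → X)

lemma phi_congr {k : ℕ} {x : X} {ω ω' : ℕ → U} (h : ∀ j < k, ω j = ω' j) :
    phi F k x ω = phi F k x ω' := by
  induction k with
  | zero => rfl
  | succ k ih =>
    simp only [phi]
    rw [ih (fun j hj => h j (Nat.lt_succ_of_lt hj)), h k (Nat.lt_succ_self k)]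

lemma phi_add (m k : ℕ) (x : X) (ω : ℕ → U) :
    phi F (m + k) x ω = phi F k (phi F m x ω) (fun i => ω (m + i)) := by
  induction k with
  | zero => rfl
  | succ k ih =>
    show phi F ((m + k) + 1) x ω = _
    simp only [phi, ih]

lemma continuous_phi (hF : ∀ u, Continuous fun x => F x u) (k : ℕ) (ω : ℕ → U) :
    Continuous fun x => phi F k x ω := by
  induction k with
  | zero => exact continuous_id
  | succ k ih => exact (hF (ω k)).comp ih

variable {Q : Set X}

lemma exists_good_control (hinv : StronglyInvariant F Q) (n : ℕ) :
    ∀ x ∈ Q, ∃ ω : ℕ → U, ∀ i, 1 ≤ i → i ≤ n → phi F i x ω ∈ interior Q := by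
  induction n with
  | zero =>
    intro x hx
    obtain ⟨u, _⟩ := hinv x hx
    exact ⟨fun _ => u, fun i h1 h2 => by omega⟩
  | succ n ih =>
    intro x hx
    obtain ⟨ω, hω⟩ := ih x hx
    have hy : phi F n x ω ∈ Q := by
      rcases Nat.eq_zero_or_pos n with rfl | hn
      · exact hx
      · exact interior_subset (hω n hn le_rfl)
    obtain ⟨u, hu⟩ := hinv _ hy
    refine ⟨fun j => if j < n then ω j else u, fun i h1 h2 => ?_⟩
    by_cases hi : i ≤ n
    · have : phi F i x (fun j => if j < n then ω j else u) = phi F i x ω :=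
        phi_congr F (fun j hj => by simp [show j < n by omega])
      rw [this]; exact hω i h1 hi
    · have hieq : i = n + 1 := by omega
      subst hieq
      show F (phi F n x _) _ ∈ interior Q
      have h1 : phi F n x (fun j => if j < n then ω j else u) = phi F n x ω :=
        phi_congr F (fun j hj => by simp [hj])
      have h2 : (if n < n then ω n else u) = u := by simp
      simp only [h1]
      simpa using hu

lemma exists_finset_spanning (hF : ∀ u, Continuous fun x => F x u) (hQ : IsCompact Q)
    (hinv : StronglyInvariant F Q) (n : ℕ) :
    ∃ S : Finset (ℕ → U), IsSpanningSet F Q n ↑S := by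
  classical
  rcases Q.eq_empty_or_nonempty with rfl | ⟨x₀, hx₀⟩
  · exact ⟨∅, fun x hx => absurd hx (Set.notMem_empty x)⟩
  haveI : Nonempty U := ⟨(hinv x₀ hx₀).choose⟩
  choose! w hw using exists_good_control F hinv n
  set V : X → Set X := fun x =>
    ⋂ i ∈ Finset.Icc 1 n, (fun y => phi F i y (w x)) ⁻¹' interior Q with hV
  have hVopen : ∀ x, IsOpen (V x) := by
    intro x
    refine isOpen_biInter_finset fun i _ => ?_
    exact (isOpen_interior).preimage (continuous_phi F hF i (w x))
  have hVmem : ∀ x ∈ Q, V x ∈ 𝓝 x := by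
    intro x hx
    refine (hVopen x).mem_nhds ?_
    simp only [hV, Set.mem_iInter, Set.mem_preimage]
    intro i hi
    simp only [Finset.mem_Icc] at hi
    exact hw x hx i hi.1 hi.2
  obtain ⟨t, htQ, hcover⟩ := hQ.elim_nhds_subcover V hVmem
  refine ⟨t.image w, fun x hx => ?_⟩
  obtain ⟨y, hyt, hxV⟩ := Set.mem_iUnion₂.1 (hcover hx)
  refine ⟨w y, by simpa using ⟨y, hyt, rfl⟩, fun i h1 h2 => ?_⟩
  simp only [hV, Set.mem_iInter, Set.mem_preimage] at hxV
  exact hxV i (Finset.mem_Icc.2 ⟨h1, h2⟩)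

end Aux

section Sub

lemma sum_image_le_enn {α β : Type*} [DecidableEq β] (s : Finset α) (h : α → β) (g : β → ℝ≥0∞) :
    ∑ b ∈ s.image h, g b ≤ ∑ a ∈ s, g (h a) := by
  classical
  induction s using Finset.induction with
  | empty => simp
  | insert _ _ ha ih =>
    rename_i a s
    rw [Finset.image_insert, Finset.sum_insert ha]
    by_cases hmem : h a ∈ s.image h
    · rw [Finset.insert_eq_self.mpr hmem]
      exact ih.trans le_add_self
    · rw [Finset.sum_insert hmem]
      exact add_le_add_right ih _

def splice {U : Type*} (m : ℕ) (ω τ : ℕ → U) : ℕ → U := fun j => if j < m then ω j else τ (j - m)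

variable {X U : Type*} [MetricSpace X] (F : X → U → X) (f : U → ℝ) {Q : Set X}

lemma Snf_splice (m n : ℕ) (ω τ : ℕ → U) :
    Snf f (m + n) (splice m ω τ) = Snf f m ω + Snf f n τ := by
  rw [Snf, Finset.sum_range_add]
  congr 1
  · exact Finset.sum_congr rfl fun j hj => by
      simp only [Finset.mem_range] at hj
      simp [splice, hj]
  · exact Finset.sum_congr rfl fun j hj => by
      simp [splice, Nat.not_lt.2 (Nat.le_add_right m j)]

lemma sum_exp_ne_top {n : ℕ} (S : Finset (ℕ → U)) :
    (∑ ω ∈ S, ENNReal.ofReal (Real.exp (Snf f n ω))) ≠ ⊤ :=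
  (ENNReal.sum_lt_top.2 fun _ _ => ENNReal.ofReal_lt_top).ne

lemma sum_exp_ne_zero {n : ℕ} (hQne : Q.Nonempty) {S : Finset (ℕ → U)}
    (hS : IsSpanningSet F Q n ↑S) :
    (∑ ω ∈ S, ENNReal.ofReal (Real.exp (Snf f n ω))) ≠ 0 := by
  obtain ⟨x₀, hx₀⟩ := hQne
  obtain ⟨ω, hωS, -⟩ := hS x₀ hx₀
  intro h
  rw [Finset.sum_eq_zero_iff] at h
  have := h ω hωS
  simp [ENNReal.ofReal_eq_zero, Real.exp_pos, not_le.2 (Real.exp_pos _)] at this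

lemma concat_le {m n : ℕ} {S T : Finset (ℕ → U)}
    (hS : IsSpanningSet F Q m ↑S) (hT : IsSpanningSet F Q n ↑T) :
    aInv F f Q (m + n) ≤
      (∑ ω ∈ S, ENNReal.ofReal (Real.exp (Snf f m ω))) *
      (∑ τ ∈ T, ENNReal.ofReal (Real.exp (Snf f n τ))) := by
  classical
  set R : Finset (ℕ → U) := (S ×ˢ T).image (fun p => splice m p.1 p.2) with hRdef
  have hR : IsSpanningSet F Q (m + n) ↑R := by
    intro x hx
    obtain ⟨ω, hωS, hω⟩ := hS x hx
    have hyQ : phi F m x ω ∈ Q := by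
      rcases Nat.eq_zero_or_pos m with rfl | hm
      · exact hx
      · exact interior_subset (hω m hm le_rfl)
    obtain ⟨τ, hτT, hτ⟩ := hT _ hyQ
    refine ⟨splice m ω τ, by
      simp only [hRdef, Finset.coe_image, Set.mem_image, Finset.mem_coe, Finset.mem_product]
      exact ⟨(ω, τ), ⟨hωS, hτT⟩, rfl⟩, fun i h1 h2 => ?_⟩
    have key : ∀ j ≤ m, phi F j x (splice m ω τ) = phi F j x ω := fun j hj =>
      phi_congr F fun l hl => by simp [splice, show l < m by omega]
    by_cases hi : i ≤ m
    · rw [key i hi]; exact hω i h1 hi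
    · have : i = m + (i - m) := by omega
      rw [this, phi_add, key m le_rfl]
      have hfun : (fun l => splice m ω τ (m + l)) = τ := by
        funext l; simp [splice, Nat.not_lt.2 (Nat.le_add_right m l)]
      rw [hfun]
      exact hτ (i - m) (by omega) (by omega)
  calc aInv F f Q (m + n)
      ≤ ∑ ρ ∈ R, ENNReal.ofReal (Real.exp (Snf f (m + n) ρ)) := iInf₂_le R hR
    _ ≤ ∑ p ∈ S ×ˢ T, ENNReal.ofReal (Real.exp (Snf f (m + n) (splice m p.1 p.2))) :=
        sum_image_le_enn _ _ _
    _ = (∑ ω ∈ S, ENNReal.ofReal (Real.exp (Snf f m ω))) *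
        (∑ τ ∈ T, ENNReal.ofReal (Real.exp (Snf f n τ))) := by
        rw [Finset.sum_mul_sum, ← Finset.sum_product']
        refine Finset.sum_congr rfl fun p _ => ?_
        rw [Snf_splice, Real.exp_add, ENNReal.ofReal_mul (Real.exp_pos _).le]

lemma aInv_ne_top (hF : ∀ u, Continuous fun x => F x u) (hQ : IsCompact Q)
    (hinv : StronglyInvariant F Q) (n : ℕ) : aInv F f Q n ≠ ⊤ := by
  obtain ⟨S, hS⟩ := exists_finset_spanning F hF hQ hinv n
  exact ((iInf₂_le S hS).trans_lt (sum_exp_ne_top f S).lt_top).ne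

lemma aInv_submul (hF : ∀ u, Continuous fun x => F x u) (hQ : IsCompact Q)
    (hinv : StronglyInvariant F Q) (hQne : Q.Nonempty) (m n : ℕ) :
    aInv F f Q (m + n) ≤ aInv F f Q m * aInv F f Q n := by
  classical
  have hm : aInv F f Q m = ⨅ p : {S : Finset (ℕ → U) // IsSpanningSet F Q m ↑S},
      ∑ ω ∈ p.1, ENNReal.ofReal (Real.exp (Snf f m ω)) := by
    rw [aInv, iInf_subtype']
  have hn : aInv F f Q n = ⨅ q : {T : Finset (ℕ → U) // IsSpanningSet F Q n ↑T},
      ∑ τ ∈ q.1, ENNReal.ofReal (Real.exp (Snf f n τ)) := by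
    rw [aInv, iInf_subtype']
  haveI hne_m : Nonempty {S : Finset (ℕ → U) // IsSpanningSet F Q m ↑S} := by
    obtain ⟨S, hS⟩ := exists_finset_spanning F hF hQ hinv m
    exact ⟨⟨S, hS⟩⟩
  haveI hne_n : Nonempty {T : Finset (ℕ → U) // IsSpanningSet F Q n ↑T} := by
    obtain ⟨T, hT⟩ := exists_finset_spanning F hF hQ hinv n
    exact ⟨⟨T, hT⟩⟩
  rw [hm, hn, ENNReal.iInf_mul (fun h _ => absurd h (by
    obtain ⟨q⟩ := hne_n
    exact ((iInf_le _ q).trans_lt (sum_exp_ne_top f q.1).lt_top).ne))]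
  refine le_iInf fun p => ?_
  rw [ENNReal.mul_iInf_of_ne (sum_exp_ne_zero F f hQne p.2) (sum_exp_ne_top f p.1)]
  exact le_iInf fun q => concat_le F f p.2 q.2

lemma aInv_zero (hQne : Q.Nonempty) (hinv : StronglyInvariant F Q) : aInv F f Q 0 = 1 := by
  classical
  obtain ⟨x₀, hx₀⟩ := hQne
  obtain ⟨u₀, -⟩ := hinv x₀ hx₀
  refine le_antisymm ?_ ?_
  · have hS : IsSpanningSet F Q 0 ↑({fun _ => u₀} : Finset (ℕ → U)) := by
      intro x hx
      exact ⟨fun _ => u₀, by simp, fun i h1 h2 => by omega⟩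
    refine le_trans (iInf₂_le (f := fun (S : Finset (ℕ → U)) (_ : IsSpanningSet F Q 0 ↑S) =>
      ∑ ω ∈ S, ENNReal.ofReal (Real.exp (Snf f 0 ω))) _ hS) ?_
    simp [Snf]
  · refine le_iInf₂ fun S hS => ?_
    obtain ⟨ω, hωS, -⟩ := hS x₀ hx₀
    calc (1 : ℝ≥0∞) = ENNReal.ofReal (Real.exp (Snf f 0 ω)) := by simp [Snf]
      _ ≤ _ := Finset.single_le_sum (f := fun ω => ENNReal.ofReal (Real.exp (Snf f 0 ω)))
          (fun _ _ => zero_le) hωS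

end Sub

section Limit

variable {X U : Type*} [MetricSpace X] (F : X → U → X) (f : U → ℝ) {Q : Set X}

lemma aInv_empty (hQe : Q = ∅) (n : ℕ) : aInv F f Q n = 0 := by
  classical
  refine le_antisymm ?_ zero_le
  have hS : IsSpanningSet F Q n (↑(∅ : Finset (ℕ → U))) := by
    intro x hx
    rw [hQe] at hx
    exact absurd hx (Set.notMem_empty x)
  refine le_trans (iInf₂_le (f := fun (S : Finset (ℕ → U)) (_ : IsSpanningSet F Q n ↑S) =>
    ∑ ω ∈ S, ENNReal.ofReal (Real.exp (Snf f n ω))) _ hS) ?_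
  simp

lemma tendsto_bot_of_eventually_zero {k : ℕ} (hk : ∀ n, k ≤ n → aInv F f Q n = 0) :
    Tendsto (fun n : ℕ => (((n : ℝ)⁻¹ : ℝ) : EReal) * ENNReal.log (aInv F f Q n)) atTop
      (𝓝 ⊥) := by
  have h : ∀ᶠ n : ℕ in atTop, (((n : ℝ)⁻¹ : ℝ) : EReal) * ENNReal.log (aInv F f Q n) = ⊥ := by
    filter_upwards [eventually_ge_atTop (max k 1)] with n hn
    rw [hk n (le_trans (le_max_left _ _) hn), ENNReal.log_zero, EReal.mul_bot_of_pos]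
    have h1 : (1 : ℝ) ≤ (n : ℝ) := by
      exact_mod_cast le_trans (le_max_right k 1) hn
    exact EReal.coe_pos.2 (by positivity)
  exact Tendsto.congr' (EventuallyEq.symm h) tendsto_const_nhds

lemma exists_tendsto (hF : ∀ u, Continuous fun x => F x u) (hQ : IsCompact Q)
    (hinv : StronglyInvariant F Q) :
    ∃ c : EReal, c ≠ ⊤ ∧
      Tendsto (fun n : ℕ => (((n : ℝ)⁻¹ : ℝ) : EReal) * ENNReal.log (aInv F f Q n)) atTop
        (𝓝 c) := by
  rcases Q.eq_empty_or_nonempty with hQe | hQne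
  · exact ⟨⊥, bot_ne_top,
      tendsto_bot_of_eventually_zero F f (k := 0) fun n _ => aInv_empty F f hQe n⟩
  by_cases hzero : ∃ k, 0 < k ∧ aInv F f Q k = 0
  · obtain ⟨k, hkpos, hk0⟩ := hzero
    refine ⟨⊥, bot_ne_top, tendsto_bot_of_eventually_zero F f (k := k) fun n hn => ?_⟩
    have : aInv F f Q ((n - k) + k) ≤ aInv F f Q (n - k) * aInv F f Q k :=
      aInv_submul F f hF hQ hinv hQne _ _
    rw [hk0, mul_zero] at this
    have hnk : (n - k) + k = n := by omega
    rw [hnk] at this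
    exact le_antisymm this zero_le
  push_neg at hzero
  have hpos : ∀ n, aInv F f Q n ≠ 0 := by
    intro n
    rcases Nat.eq_zero_or_pos n with rfl | hn
    · rw [aInv_zero F f hQne hinv]; exact one_ne_zero
    · exact hzero n hn
  have hfin : ∀ n, aInv F f Q n ≠ ⊤ := aInv_ne_top F f hF hQ hinv
  set u : ℕ → ℝ := fun n => Real.log ((aInv F f Q n).toReal) with hu
  have htoReal_pos : ∀ n, 0 < (aInv F f Q n).toReal := fun n =>
    ENNReal.toReal_pos (hpos n) (hfin n)
  have hlog : ∀ n, ENNReal.log (aInv F f Q n) = ((u n : ℝ) : EReal) := fun n =>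
    ENNReal.log_pos_real' (htoReal_pos n)
  have hsub : Subadditive u := by
    intro m n
    have h1 : (aInv F f Q (m + n)).toReal ≤ (aInv F f Q m).toReal * (aInv F f Q n).toReal := by
      rw [← ENNReal.toReal_mul]
      exact ENNReal.toReal_mono (ENNReal.mul_ne_top (hfin m) (hfin n))
        (aInv_submul F f hF hQ hinv hQne m n)
    calc u (m + n) ≤ Real.log ((aInv F f Q m).toReal * (aInv F f Q n).toReal) :=
          Real.log_le_log (htoReal_pos _) h1
      _ = u m + u n := Real.log_mul (htoReal_pos m).ne' (htoReal_pos n).ne'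
  by_cases hbdd : BddBelow (Set.range fun n => u n / n)
  · refine ⟨((hsub.lim : ℝ) : EReal), EReal.coe_ne_top _, ?_⟩
    have h1 : Tendsto (fun n => u n / n) atTop (𝓝 hsub.lim) := hsub.tendsto_lim hbdd
    have h2 : Tendsto (fun n : ℕ => ((u n / n : ℝ) : EReal)) atTop (𝓝 ((hsub.lim : ℝ) : EReal)) :=
      EReal.tendsto_coe.2 h1
    refine h2.congr fun n => ?_
    rw [hlog n, div_eq_inv_mul, EReal.coe_mul]
  · refine ⟨⊥, bot_ne_top, ?_⟩
    have hev : ∀ L : ℝ, ∀ᶠ p in atTop, u p / p < L := by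
      intro L
      obtain ⟨y, ⟨n, hyn⟩, hyL⟩ := not_bddBelow_iff.1 hbdd (min L 0)
      have hy' : u n / n = y := hyn
      have hn0 : n ≠ 0 := by
        rintro rfl
        have h0 : u 0 / ((0 : ℕ) : ℝ) = 0 := by norm_num
        rw [h0] at hy'
        rw [← hy'] at hyL
        exact absurd hyL (not_lt.2 (min_le_right L 0))
      have hlt : u n / n < L := by
        rw [hy']
        exact lt_of_lt_of_le hyL (min_le_left L 0)
      exact hsub.eventually_div_lt_of_div_lt hn0 hlt
    refine (EReal.tendsto_nhds_bot_iff_real).2 fun L => ?_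
    filter_upwards [hev L, eventually_ge_atTop 1] with n hnL hn1
    rw [hlog n]
    calc (((n : ℝ)⁻¹ : ℝ) : EReal) * ((u n : ℝ) : EReal) = ((u n / n : ℝ) : EReal) := by
          rw [← EReal.coe_mul, div_eq_inv_mul]
      _ < (L : EReal) := EReal.coe_lt_coe_iff.2 hnL

end Limit

section MulConst

lemma tendsto_mul_const {b : ℕ → EReal} {c : EReal}
    (h : Tendsto (fun n : ℕ => (((n : ℝ)⁻¹ : ℝ) : EReal) * b n) atTop (𝓝 c))
    {N : ℕ} (hN : 0 < N) :
    Tendsto (fun n : ℕ => (((n : ℝ)⁻¹ : ℝ) : EReal) * b (n * N)) atTop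
      (𝓝 (((N : ℝ) : EReal) * c)) := by
  have hmono : StrictMono (fun n : ℕ => n * N) := fun a b hab => by
    exact (Nat.mul_lt_mul_right hN).2 hab
  have hcomp : Tendsto (fun n : ℕ => ((((n * N : ℕ) : ℝ)⁻¹ : ℝ) : EReal) * b (n * N)) atTop
      (𝓝 c) := h.comp hmono.tendsto_atTop
  have hcont : ContinuousAt (fun p : EReal × EReal => p.1 * p.2) (((N : ℝ) : EReal), c) := by
    refine EReal.continuousAt_mul ?_ ?_ ?_ ?_
    · left
      show ((N : ℝ) : EReal) ≠ 0
      exact_mod_cast EReal.coe_ne_zero.2 (Nat.cast_ne_zero.2 hN.ne')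
    · left
      show ((N : ℝ) : EReal) ≠ 0
      exact_mod_cast EReal.coe_ne_zero.2 (Nat.cast_ne_zero.2 hN.ne')
    · left
      show ((N : ℝ) : EReal) ≠ ⊥
      exact EReal.coe_ne_bot _
    · left
      show ((N : ℝ) : EReal) ≠ ⊤
      exact EReal.coe_ne_top _
  have hmul : Tendsto (fun n : ℕ =>
      ((N : ℝ) : EReal) * (((((n * N : ℕ) : ℝ)⁻¹ : ℝ) : EReal) * b (n * N))) atTop
      (𝓝 (((N : ℝ) : EReal) * c)) :=
    hcont.tendsto.comp (by
      rw [nhds_prod_eq]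
      exact tendsto_const_nhds.prodMk hcomp)
  refine hmul.congr' ?_
  filter_upwards [eventually_ge_atTop 1] with n hn
  rw [← mul_assoc, ← EReal.coe_mul]
  congr 2
  have hn' : (n : ℝ) ≠ 0 := by positivity
  have hN' : (N : ℝ) ≠ 0 := by positivity
  push_cast
  field_simp

end MulConst

section Inner

variable {X U : Type*} [MetricSpace X] (F : X → U → X) (f : U → ℝ) {Q : Set X}

lemma sum_range_mul_split (g : ℕ → ℝ) (N : ℕ) (m : ℕ) :
    ∑ j ∈ Finset.range (m * N), g j
      = ∑ k ∈ Finset.range m, ∑ i ∈ Finset.range N, g (k * N + i) := by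
  induction m with
  | zero => simp
  | succ m ih => rw [Finset.sum_range_succ, ← ih, Nat.succ_mul, Finset.sum_range_add]

lemma blockify_psi {N : ℕ} (hN : 0 < N) (ω : ℕ → U) :
    (fun j : ℕ => (fun (k : ℕ) (i : Fin N) => ω (k * N + (i : ℕ))) (j / N)
      ⟨j % N, Nat.mod_lt j hN⟩) = ω := by
  funext j
  show ω (j / N * N + j % N) = ω j
  congr 1
  rw [Nat.mul_comm (j / N) N]
  exact Nat.div_add_mod j N

lemma weight_eq {N : ℕ} (hN : 0 < N) (n : ℕ) (η : ℕ → Fin N → U) :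
    (∑ k ∈ Finset.range n, ∑ i : Fin N, f (η k i))
      = Snf f (n * N) (fun j : ℕ => η (j / N) ⟨j % N, Nat.mod_lt j hN⟩) := by
  rw [Snf, sum_range_mul_split _ N n]
  refine Finset.sum_congr rfl fun k _ => ?_
  rw [← Fin.sum_univ_eq_sum_range (fun i => f (η ((k * N + i) / N) ⟨(k * N + i) % N,
    Nat.mod_lt _ hN⟩)) N]
  refine Finset.sum_congr rfl fun i _ => ?_
  congr 1
  have hdiv : (k * N + (i : ℕ)) / N = k := by
    rw [show k * N + (i : ℕ) = (i : ℕ) + N * k by ring, Nat.add_mul_div_left _ _ hN,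
      Nat.div_eq_of_lt i.isLt, Nat.zero_add]
  have hmod : (k * N + (i : ℕ)) % N = (i : ℕ) := by
    rw [show k * N + (i : ℕ) = (i : ℕ) + N * k by ring, Nat.add_mul_mod_self_left,
      Nat.mod_eq_of_lt i.isLt]
  rw [hdiv]
  congr 1
  exact Fin.ext hmod.symm

lemma inner_eq {N : ℕ} (hN : 0 < N) (n : ℕ) :
    (⨅ (S : Finset (ℕ → Fin N → U))
      (_ : ∀ x ∈ Q, ∃ η ∈ S, ∀ i, 1 ≤ i → i ≤ n * N →
        phi F i x (fun j : ℕ => η (j / N) ⟨j % N, Nat.mod_lt j hN⟩) ∈ interior Q),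
      ∑ η ∈ S, ENNReal.ofReal (Real.exp (∑ k ∈ Finset.range n, ∑ i : Fin N, f (η k i))))
    = aInv F f Q (n * N) := by
  classical
  refine le_antisymm (le_iInf₂ fun T hT => ?_) (le_iInf₂ fun S hS => ?_)
  · -- inner ≤ sum over T, for T an (n*N)-spanning set
    set Ψ : (ℕ → U) → (ℕ → Fin N → U) := fun ω k i => ω (k * N + (i : ℕ)) with hΨ
    have hinj : Function.Injective Ψ := by
      intro ω ω' h
      have := congrArg (fun η => (fun j : ℕ => η (j / N)
        (⟨j % N, Nat.mod_lt j hN⟩ : Fin N))) h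
      exact (blockify_psi hN ω).symm.trans (this.trans (blockify_psi hN ω'))
    have hcond : ∀ x ∈ Q, ∃ η ∈ T.image Ψ, ∀ i, 1 ≤ i → i ≤ n * N →
        phi F i x (fun j : ℕ => η (j / N) ⟨j % N, Nat.mod_lt j hN⟩) ∈ interior Q := by
      intro x hx
      obtain ⟨ω, hωT, hω⟩ := hT x hx
      refine ⟨Ψ ω, Finset.mem_image_of_mem _ hωT, fun i h1 h2 => ?_⟩
      rw [show (fun j : ℕ => Ψ ω (j / N) ⟨j % N, Nat.mod_lt j hN⟩) = ω from blockify_psi hN ω]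
      exact hω i h1 h2
    refine le_trans (iInf₂_le (T.image Ψ) hcond) ?_
    rw [Finset.sum_image (fun a _ b _ h => hinj h)]
    refine le_of_eq (Finset.sum_congr rfl fun ω hω => ?_)
    rw [weight_eq f hN n (Ψ ω), show (fun j : ℕ => Ψ ω (j / N) ⟨j % N, Nat.mod_lt j hN⟩) = ω
      from blockify_psi hN ω]
  · -- aInv ≤ sum over S
    set Φ : (ℕ → Fin N → U) → (ℕ → U) :=
      fun η j => η (j / N) ⟨j % N, Nat.mod_lt j hN⟩ with hΦ
    have hspan : IsSpanningSet F Q (n * N) ↑(S.image Φ) := by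
      intro x hx
      obtain ⟨η, hηS, hη⟩ := hS x hx
      exact ⟨Φ η, by simpa using ⟨η, hηS, rfl⟩, hη⟩
    refine le_trans (iInf₂_le (f := fun (T : Finset (ℕ → U))
      (_ : IsSpanningSet F Q (n * N) ↑T) =>
      ∑ ω ∈ T, ENNReal.ofReal (Real.exp (Snf f (n * N) ω))) _ hspan) ?_
    refine le_trans (sum_image_le_enn S Φ _) ?_
    refine le_of_eq (Finset.sum_congr rfl fun η hη => ?_)
    rw [weight_eq f hN n η]

end Inner

theorem pressure_power_rule' {X U : Type*} [MetricSpace X]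
    (F : X → U → X) (hF : ∀ u, Continuous fun x => F x u)
    (Q : Set X) (hQ : IsCompact Q) (hinv : StronglyInvariant F Q)
    (f : U → ℝ) (N : ℕ) (hN : 0 < N) :
    Filter.atTop.limsup (fun n : ℕ =>
        (((n : ℝ)⁻¹ : ℝ) : EReal) * ENNReal.log (
          ⨅ (S : Finset (ℕ → Fin N → U))
            (_ : ∀ x ∈ Q, ∃ η ∈ S, ∀ i, 1 ≤ i → i ≤ n * N →
              phi F i x (fun j : ℕ => η (j / N) ⟨j % N, Nat.mod_lt j hN⟩) ∈ interior Q),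
            ∑ η ∈ S, ENNReal.ofReal
              (Real.exp (∑ k ∈ Finset.range n, ∑ i : Fin N, f (η k i)))))
      = ((N : ℝ) : EReal) *
        (Filter.atTop.limsup fun n : ℕ =>
          (((n : ℝ)⁻¹ : ℝ) : EReal) * ENNReal.log (aInv F f Q n)) := by
  obtain ⟨c, hcT, hc⟩ := exists_tendsto F f hF hQ hinv
  have h2 := tendsto_mul_const hc hN
  have hseq : (fun n : ℕ =>
        (((n : ℝ)⁻¹ : ℝ) : EReal) * ENNReal.log (
          ⨅ (S : Finset (ℕ → Fin N → U))
            (_ : ∀ x ∈ Q, ∃ η ∈ S, ∀ i, 1 ≤ i → i ≤ n * N →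
              phi F i x (fun j : ℕ => η (j / N) ⟨j % N, Nat.mod_lt j hN⟩) ∈ interior Q),
            ∑ η ∈ S, ENNReal.ofReal
              (Real.exp (∑ k ∈ Finset.range n, ∑ i : Fin N, f (η k i)))))
      = fun n : ℕ => (((n : ℝ)⁻¹ : ℝ) : EReal) * ENNReal.log (aInv F f Q (n * N)) := by
    funext n
    rw [inner_eq F f hN n]
  rw [hseq, h2.limsup_eq, hc.limsup_eq]

/-- Power rule: for the `N`-step system with potential `g(u_0,…,u_{N−1}) = Σ_{i<N} f(u_i)`
(where spanning sets are required to keep the state in `int Q` at all intermediate times),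
the inner invariance pressure satisfies `P_int^N(g,Q) = N · P_int(f,Q)`. -/
theorem pressure_power_rule {X U : Type*} [MetricSpace X]
    (F : X → U → X) (hF : ∀ u, Continuous fun x => F x u)
    (Q : Set X) (hQ : IsCompact Q) (hinv : StronglyInvariant F Q)
    (f : U → ℝ) (N : ℕ) (hN : 0 < N) :
    Filter.atTop.limsup (fun n : ℕ =>
        (((n : ℝ)⁻¹ : ℝ) : EReal) * ENNReal.log (
          ⨅ (S : Finset (ℕ → Fin N → U))
            (_ : ∀ x ∈ Q, ∃ η ∈ S, ∀ i, 1 ≤ i → i ≤ n * N →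
              phi F i x (fun j : ℕ => η (j / N) ⟨j % N, Nat.mod_lt j hN⟩) ∈ interior Q),
            ∑ η ∈ S, ENNReal.ofReal
              (Real.exp (∑ k ∈ Finset.range n, ∑ i : Fin N, f (η k i)))))
      = ((N : ℝ) : EReal) * Pinv F f Q := by
  exact pressure_power_rule' F hF Q hQ hinv f N hN
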